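/- Suppose A_min + B > 0, a_min + b > 0, B > b > 0, A_max > A_min, a_max > a_min, and α ≥ 0. If a(s) > 0 for all s in the relevant range and b < B, then for fixed marginal benefits with a(s) = A(S), the protected group's marginal welfare differential weakly exceeds the nonprotected group's: Δ'_s(α) ≥ Δ_S(α), with equality iff α = 0 or a(s) = 0. -/

import Mathlib

private lemma aux_strict (m p x y : ℝ) (hm : 0 < m) (hx : 0 < x) (hxy : x < y)
    (hp1 : p < 1) (hp0 : p ≠ 0) :
    (1 / p) * ((m + y) ^ p - y ^ p) < (1 / p) * ((m + x) ^ p - x ^ p) := by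
  set f : ℝ → ℝ := fun t => (1 / p) * ((m + t) ^ p - t ^ p) with hf
  have key : StrictAntiOn f (Set.Icc x y) := by
    have hderiv : ∀ t ∈ Set.Icc x y,
        HasDerivAt f ((m + t) ^ (p - 1) - t ^ (p - 1)) t := by
      intro t ht
      have ht0 : 0 < t := lt_of_lt_of_le hx ht.1
      have hmt : m + t ≠ 0 := by positivity
      have h1 : HasDerivAt (fun u : ℝ => (m + u) ^ p) (p * (m + t) ^ (p - 1) * 1) t := by
        exact (Real.hasDerivAt_rpow_const (Or.inl hmt)).comp t
          ((hasDerivAt_id t).const_add m)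
      have h2 : HasDerivAt (fun u : ℝ => u ^ p) (p * t ^ (p - 1)) t :=
        Real.hasDerivAt_rpow_const (Or.inl ht0.ne')
      have := (h1.sub h2).const_mul (1 / p)
      refine this.congr_deriv ?_
      rw [mul_one, ← mul_sub, ← mul_assoc, one_div_mul_cancel hp0]
      ring
    apply strictAntiOn_of_deriv_neg (convex_Icc x y)
    · exact continuousOn_of_forall_continuousAt fun t ht => (hderiv t ht).continuousAt
    · intro t ht
      rw [interior_Icc] at ht
      have ht' : t ∈ Set.Icc x y := Set.mem_Icc.2 ⟨le_of_lt ht.1, le_of_lt ht.2⟩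
      rw [(hderiv t ht').deriv]
      have ht0 : 0 < t := lt_of_lt_of_le hx ht'.1
      have : (m + t : ℝ) ^ (p - 1) < t ^ (p - 1) :=
        Real.rpow_lt_rpow_of_neg ht0 (by linarith) (by linarith)
      linarith
  exact key (Set.mem_Icc.2 ⟨le_rfl, le_of_lt hxy⟩)
    (Set.mem_Icc.2 ⟨le_of_lt hxy, le_rfl⟩) hxy

/-- When the marginal benefits of the two groups are equal and
positive, a(s) = A(S) > 0, and the protected base utility is lower (0 < b < B),
the protected marginal welfare differential weakly exceeds the nonprotected one,
with equality iff α = 0 (or the common marginal benefit is 0, excluded here). -/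
theorem lower_base_larger_differential (Amax Amin amax amin B b α S s : ℝ)
    (hAB : 0 < Amin + B) (hab : 0 < amin + b)
    (hBb : b < B) (hb : 0 < b)
    (hA : Amin < Amax) (ha : amin < amax) (hα : 0 ≤ α)
    (A a : ℝ → ℝ)
    (hAdef : ∀ t, A t = (1 - t) * Amax + t * Amin)
    (hadef : ∀ t, a t = (1 - t) * amax + t * amin)
    (heq : a s = A S) (hpos : 0 < a s)
    (ΔS Δs : ℝ)
    (hΔS : ΔS = if α = 1 then Real.log (A S + B) - Real.log B
      else (1 / (1 - α)) * ((A S + B) ^ (1 - α) - B ^ (1 - α)))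
    (hΔs : Δs = if α = 1 then Real.log (a s + b) - Real.log b
      else (1 / (1 - α)) * ((a s + b) ^ (1 - α) - b ^ (1 - α))) :
    ΔS ≤ Δs ∧ (Δs = ΔS ↔ α = 0 ∨ a s = 0) := by
  have hB : (0:ℝ) < B := lt_trans hb hBb
  rcases eq_or_lt_of_le hα with h0 | h0
  · -- α = 0
    have hα0 : α = 0 := h0.symm
    have h1 : α ≠ 1 := by rw [hα0]; norm_num
    rw [hΔS, hΔs, if_neg h1, if_neg h1, hα0, heq]
    norm_num [Real.rpow_one]
  · -- α > 0 : strict inequality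
    have hstrict : ΔS < Δs := by
      by_cases h1 : α = 1
      · rw [hΔS, hΔs, if_pos h1, if_pos h1, ← heq]
        set m := a s with hm
        have hmb : 0 < m + b := by linarith
        have hmB : 0 < m + B := by linarith
        have hlt : (m + B) * b < (m + b) * B := by nlinarith
        have := Real.log_lt_log (by positivity) hlt
        rw [Real.log_mul (by positivity) hb.ne', Real.log_mul (by positivity) hB.ne'] at this
        linarith
      · rw [hΔS, hΔs, if_neg h1, if_neg h1, ← heq]
        exact aux_strict (a s) (1 - α) b B hpos hb hBb (by linarith)
          (by intro h; apply h1; linarith)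
    refine ⟨le_of_lt hstrict, ?_, ?_⟩
    · intro h; exact absurd h (ne_of_gt hstrict)
    · rintro (h | h)
      · exact absurd h (by exact fun hh => absurd hh.symm (ne_of_lt h0) : ¬ α = 0)
      · exact absurd h (by exact fun hh => absurd hh.symm (ne_of_lt hpos) : ¬ a s = 0)
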